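/- Let ℓ > 0 and λ > 0 be real numbers. The function f(α) := α^{ℓ/2}(α − λ) attains its minimum over [0,1] uniquely at α* = min(ℓλ/(ℓ+2), 1); that is, f(α*) ≤ f(α) for all α ∈ [0,1], with strict inequality for α ≠ α*. -/

import Mathlib

open Set

private lemma lpcm_hasDeriv (p lam x : ℝ) (hx : 0 < x) :
    HasDerivAt (fun y : ℝ => y ^ p * (y - lam))
      (x ^ (p - 1) * ((p + 1) * x - p * lam)) x := by
  have h1 : HasDerivAt (fun y : ℝ => y ^ p) (p * x ^ (p - 1)) x :=
    Real.hasDerivAt_rpow_const (Or.inl hx.ne')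
  have h2 : HasDerivAt (fun y : ℝ => y - lam) 1 x := (hasDerivAt_id x).sub_const lam
  have h := h1.mul h2
  refine h.congr_deriv ?_
  have hxp : x ^ p = x ^ (p - 1) * x := by
    rw [show p = p - 1 + 1 by ring, Real.rpow_add hx, Real.rpow_one]; ring_nf
  rw [hxp]; ring

private lemma lpcm_key (p lam : ℝ) (hp : 0 < p) (hlam : 0 < lam) :
    ∀ α ∈ Set.Icc (0 : ℝ) 1,
      (min (p * lam / (p + 1)) 1) ^ p * (min (p * lam / (p + 1)) 1 - lam)
          ≤ α ^ p * (α - lam) ∧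
      (α ≠ min (p * lam / (p + 1)) 1 →
        (min (p * lam / (p + 1)) 1) ^ p * (min (p * lam / (p + 1)) 1 - lam)
          < α ^ p * (α - lam)) := by
  set f : ℝ → ℝ := fun y => y ^ p * (y - lam) with hf
  set c : ℝ := p * lam / (p + 1) with hcdef
  have hp1 : 0 < p + 1 := by linarith
  have hc : 0 < c := div_pos (mul_pos hp hlam) hp1
  set m : ℝ := min c 1 with hmdef
  have hm0 : 0 < m := lt_min hc one_pos
  have hm1 : m ≤ 1 := min_le_right _ _
  have hcont : ∀ s : Set ℝ, ContinuousOn f s := by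
    intro s x _
    exact ((Real.continuousAt_rpow_const x p (Or.inr hp.le)).mul
      (by fun_prop)).continuousWithinAt
  -- strict anti on [0, m]
  have hanti : StrictAntiOn f (Icc 0 m) := by
    apply strictAntiOn_of_deriv_neg (convex_Icc 0 m) (hcont _)
    intro x hx
    rw [interior_Icc] at hx
    rw [(lpcm_hasDeriv p lam x hx.1).deriv]
    apply mul_neg_of_pos_of_neg (Real.rpow_pos_of_pos hx.1 _)
    have hxc : x < c := lt_of_lt_of_le hx.2 (min_le_left _ _)
    have := (lt_div_iff₀ hp1).mp hxc
    nlinarith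
  -- strict mono on [m, 1]
  have hmono : StrictMonoOn f (Icc m 1) := by
    apply strictMonoOn_of_deriv_pos (convex_Icc m 1) (hcont _)
    intro x hx
    rw [interior_Icc] at hx
    have hx0 : 0 < x := lt_trans hm0 hx.1
    rw [(lpcm_hasDeriv p lam x hx0).deriv]
    apply mul_pos (Real.rpow_pos_of_pos hx0 _)
    have hmc : m = c := by
      rcases min_cases c 1 with ⟨h1, _⟩ | ⟨h1, h2⟩
      · exact h1
      · exfalso; rw [hmdef, h1] at hx; exact absurd hx.2 (not_lt.mpr hx.1.le)
    have hxc : c < x := hmc ▸ hx.1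
    have := (div_lt_iff₀ hp1).mp hxc
    nlinarith
  intro α hα
  have hmem : m ∈ Icc (0 : ℝ) 1 := ⟨hm0.le, hm1⟩
  rcases lt_trichotomy α m with h | h | h
  · have hα' : α ∈ Icc (0 : ℝ) m := ⟨hα.1, h.le⟩
    have hmm : m ∈ Icc (0 : ℝ) m := ⟨hm0.le, le_refl m⟩
    have hlt : f m < f α := hanti hα' hmm h
    exact ⟨hlt.le, fun _ => hlt⟩
  · subst h
    exact ⟨le_refl _, fun hne => absurd rfl hne⟩
  · have hα' : α ∈ Icc m 1 := ⟨h.le, hα.2⟩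
    have hmm : m ∈ Icc m 1 := ⟨le_refl m, hm1⟩
    have hlt : f m < f α := hmono hmm hα' h
    exact ⟨hlt.le, fun _ => hlt⟩

/-- For `ℓ > 0` and `λ > 0`, the function `f(α) = α^{ℓ/2} (α - λ)` attains its minimum
over `[0, 1]` uniquely at `α* = min(ℓλ/(ℓ+2), 1)`. -/
theorem last_pair_cost_minimizer (ℓ lam : ℝ) (hℓ : 0 < ℓ) (hlam : 0 < lam) :
    ∀ α ∈ Set.Icc (0 : ℝ) 1,
      (min (ℓ * lam / (ℓ + 2)) 1) ^ (ℓ / 2) * (min (ℓ * lam / (ℓ + 2)) 1 - lam)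
          ≤ α ^ (ℓ / 2) * (α - lam) ∧
      (α ≠ min (ℓ * lam / (ℓ + 2)) 1 →
        (min (ℓ * lam / (ℓ + 2)) 1) ^ (ℓ / 2) * (min (ℓ * lam / (ℓ + 2)) 1 - lam)
          < α ^ (ℓ / 2) * (α - lam)) := by
  have h : ℓ * lam / (ℓ + 2) = (ℓ / 2) * lam / ((ℓ / 2) + 1) := by
    field_simp
  rw [h]
  exact lpcm_key (ℓ / 2) lam (by linarith) hlam
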